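/- Let μ be a probability measure on a measurable space M, F : M → M measurable, and φ_1,…,φ_N : M → ℝ measurable functions such that each φ_i and each φ_i∘F is square-integrable with respect to μ. Assume μ-independence: μ({x ∈ M : cᵀφ(x) = 0}) = 0 for every nonzero c ∈ ℝ^N. Let (χ_k)_{k≥1} be a sequence of independent M-valued random variables each with distribution μ. Define, for each K, the empirical matrices G_K = (1/K) Σ_{i=1}^K φ(χ_i) φ(χ_i)ᵀ and V_K = (1/K) Σ_{i=1}^K φ(F(χ_i)) φ(χ_i)ᵀ, and the limit matrices G = ∫_M φ φᵀ dμ and V = ∫_M (φ∘F) φᵀ dμ. Then, with probability one, G_K is invertible for all sufficiently large K and the EDMD matrices 𝒜_{N,K} := V_K G_K^{-1} converge, as K → ∞, to the matrix 𝒜_N := V G^{-1}, i.e. ‖𝒜_{N,K} − 𝒜_N‖ → 0 almost surely in any matrix norm. -/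

import Mathlib

open MeasureTheory Filter Topology Matrix
open scoped ENNReal

section Aux

variable {M Ω : Type*} [MeasurableSpace M] [MeasurableSpace Ω]

lemma aux_integrable_mul {μ : Measure M} {f g : M → ℝ} (hf : MemLp f 2 μ)
    (hg : MemLp g 2 μ) : Integrable (fun x => f x * g x) μ := by
  have h : MemLp (f • g) 1 μ := hg.smul hf
  exact memLp_one_iff_integrable.mp h

lemma aux_slln (P : Measure Ω) [IsProbabilityMeasure P]
    (μ : Measure M) [IsProbabilityMeasure μ]
    (χ : ℕ → Ω → M) (hχmeas : ∀ k, Measurable (χ k))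
    (hiid : ProbabilityTheory.iIndepFun χ P)
    (hlaw : ∀ k, P.map (χ k) = μ)
    (g : M → ℝ) (hg : Measurable g) (hint : Integrable g μ) :
    ∀ᵐ ω ∂P, Tendsto (fun K : ℕ => (K : ℝ)⁻¹ * ∑ i ∈ Finset.range K, g (χ i ω))
      atTop (𝓝 (∫ x, g x ∂μ)) := by
  have hX0 : Integrable (fun ω => g (χ 0 ω)) P := by
    have : Integrable g (P.map (χ 0)) := by rw [hlaw]; exact hint
    exact (integrable_map_measure hg.aestronglyMeasurable (hχmeas 0).aemeasurable).mp this
  have hindepX : Pairwise (Function.onFun (ProbabilityTheory.IndepFun · · P) fun i ω => g (χ i ω)) := by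
    intro i j hij
    exact (hiid.indepFun hij).comp hg hg
  have hidentX : ∀ i, ProbabilityTheory.IdentDistrib (fun ω => g (χ i ω))
      (fun ω => g (χ 0 ω)) P P := by
    intro i
    have h0 : ProbabilityTheory.IdentDistrib (χ i) (χ 0) P P :=
      ⟨(hχmeas i).aemeasurable, (hχmeas 0).aemeasurable, by rw [hlaw, hlaw]⟩
    exact h0.comp hg
  have key := ProbabilityTheory.strong_law_ae (fun i ω => g (χ i ω)) hX0 hindepX hidentX
  have hmean : (∫ ω, g (χ 0 ω) ∂P) = ∫ x, g x ∂μ := by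
    rw [← hlaw 0, integral_map (hχmeas 0).aemeasurable hg.aestronglyMeasurable]
  filter_upwards [key] with ω hω
  rw [hmean] at hω
  simpa [smul_eq_mul] using hω

end Aux

theorem edmd_matrices_tendsto_ae {M Ω : Type*} [MeasurableSpace M]
    [MeasurableSpace Ω] (P : Measure Ω) [IsProbabilityMeasure P]
    (μ : Measure M) [IsProbabilityMeasure μ] (F : M → M) (hF : Measurable F)
    (N : ℕ) (φ : Fin N → M → ℝ)
    (hφmeas : ∀ i, Measurable (φ i)) (hφL2 : ∀ i, MemLp (φ i) 2 μ)
    (hφFL2 : ∀ i, MemLp (φ i ∘ F) 2 μ)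
    (hindep : ∀ c : Fin N → ℝ, c ≠ 0 → μ {x | ∑ i, c i * φ i x = 0} = 0)
    (χ : ℕ → Ω → M) (hχmeas : ∀ k, Measurable (χ k))
    (hiid : ProbabilityTheory.iIndepFun χ P)
    (hlaw : ∀ k, P.map (χ k) = μ)
    (GK VK : Ω → ℕ → Matrix (Fin N) (Fin N) ℝ)
    (hGK : ∀ ω K, GK ω K =
      (K : ℝ)⁻¹ • ∑ i ∈ Finset.range K, Matrix.of fun j l => φ j (χ i ω) * φ l (χ i ω))
    (hVK : ∀ ω K, VK ω K =
      (K : ℝ)⁻¹ • ∑ i ∈ Finset.range K, Matrix.of fun j l => φ j (F (χ i ω)) * φ l (χ i ω))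
    (G V : Matrix (Fin N) (Fin N) ℝ)
    (hG : G = Matrix.of fun j l => ∫ x, φ j x * φ l x ∂μ)
    (hV : V = Matrix.of fun j l => ∫ x, φ j (F x) * φ l x ∂μ) :
    ∀ᵐ ω ∂P,
      (∀ᶠ K in atTop, IsUnit (GK ω K)) ∧
      Tendsto (fun K : ℕ => VK ω K * (GK ω K)⁻¹) atTop (𝓝 (V * G⁻¹)) := by
  classical
  -- Integrability of products
  have hintG : ∀ j l : Fin N, Integrable (fun x => φ j x * φ l x) μ :=
    fun j l => aux_integrable_mul (hφL2 j) (hφL2 l)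
  have hintV : ∀ j l : Fin N, Integrable (fun x => φ j (F x) * φ l x) μ :=
    fun j l => aux_integrable_mul (hφFL2 j) (hφL2 l)
  -- G is invertible
  have hdetG : G.det ≠ 0 := by
    intro hdet
    obtain ⟨c, hc, hGc⟩ := (Matrix.exists_mulVec_eq_zero_iff).mpr hdet
    set S : M → ℝ := fun x => ∑ i, c i * φ i x with hS
    have hSmeas : Measurable S :=
      Finset.measurable_sum _ (fun i _ => (hφmeas i).const_mul (c i))
    have hSS : ∀ x, S x * S x = ∑ j, ∑ l, (c j * c l) * (φ j x * φ l x) := by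
      intro x
      rw [hS, Finset.sum_mul_sum]
      exact Finset.sum_congr rfl fun j _ => Finset.sum_congr rfl fun l _ =>
        mul_mul_mul_comm _ _ _ _
    have hintSS : Integrable (fun x => S x * S x) μ := by
      simp only [hSS]
      exact integrable_finset_sum _ fun j _ => integrable_finset_sum _ fun l _ =>
        ((hintG j l).const_mul _)
    have hpos : 0 < ∫ x, S x * S x ∂μ := by
      rw [integral_pos_iff_support_of_nonneg (fun x => mul_self_nonneg (S x)) hintSS]
      have hsupp : Function.support (fun x => S x * S x) = {x | S x = 0}ᶜ := by
        ext x; simp [Function.support, mul_self_ne_zero]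
      rw [hsupp, pos_iff_ne_zero]
      intro h0
      have h1 : μ Set.univ ≤ μ {x | S x = 0} + μ ({x | S x = 0}ᶜ) := by
        calc μ Set.univ = μ ({x | S x = 0} ∪ {x | S x = 0}ᶜ) := by
              rw [Set.union_compl_self]
          _ ≤ _ := measure_union_le _ _
      rw [hindep c hc, h0] at h1
      simp [measure_univ] at h1
    have hzero : (∫ x, S x * S x ∂μ) = 0 := by
      have hq : ∀ j l : Fin N, ∫ x, (c j * c l) * (φ j x * φ l x) ∂μ
          = c j * ((∫ x, φ j x * φ l x ∂μ) * c l) := by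
        intro j l
        rw [MeasureTheory.integral_const_mul]
        ring
      calc (∫ x, S x * S x ∂μ)
          = ∑ j, ∑ l, ∫ x, (c j * c l) * (φ j x * φ l x) ∂μ := by
            simp only [hSS]
            rw [integral_finset_sum _ fun j _ => integrable_finset_sum _ fun l _ =>
              ((hintG j l).const_mul _)]
            exact Finset.sum_congr rfl fun j _ =>
              integral_finset_sum _ fun l _ => ((hintG j l).const_mul _)
        _ = ∑ j, c j * (G.mulVec c j) := by
            refine Finset.sum_congr rfl fun j _ => ?_
            rw [Matrix.mulVec, dotProduct, Finset.mul_sum]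
            exact Finset.sum_congr rfl fun l _ => by rw [hq, hG]; rfl
        _ = 0 := by
            refine Finset.sum_eq_zero fun j _ => ?_
            rw [hGc]; simp
    exact absurd hzero hpos.ne'
  have hGunit : IsUnit G.det := isUnit_iff_ne_zero.mpr hdetG
  -- SLLN for each entry
  have hslnG : ∀ᵐ ω ∂P, ∀ j l : Fin N,
      Tendsto (fun K : ℕ => (K : ℝ)⁻¹ * ∑ i ∈ Finset.range K, φ j (χ i ω) * φ l (χ i ω))
        atTop (𝓝 (∫ x, φ j x * φ l x ∂μ)) := by
    rw [ae_all_iff]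
    intro j
    rw [ae_all_iff]
    intro l
    exact aux_slln P μ χ hχmeas hiid hlaw _ ((hφmeas j).mul (hφmeas l)) (hintG j l)
  have hslnV : ∀ᵐ ω ∂P, ∀ j l : Fin N,
      Tendsto (fun K : ℕ => (K : ℝ)⁻¹ * ∑ i ∈ Finset.range K, φ j (F (χ i ω)) * φ l (χ i ω))
        atTop (𝓝 (∫ x, φ j (F x) * φ l x ∂μ)) := by
    rw [ae_all_iff]
    intro j
    rw [ae_all_iff]
    intro l
    exact aux_slln P μ χ hχmeas hiid hlaw _ (((hφmeas j).comp hF).mul (hφmeas l)) (hintV j l)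
  filter_upwards [hslnG, hslnV] with ω hωG hωV
  -- matrix convergence
  have hGt : Tendsto (fun K : ℕ => GK ω K) atTop (𝓝 G) := by
    refine tendsto_pi_nhds.mpr ?_
    intro j
    rw [tendsto_pi_nhds]
    intro l
    have : ∀ K : ℕ, GK ω K j l = (K : ℝ)⁻¹ * ∑ i ∈ Finset.range K, φ j (χ i ω) * φ l (χ i ω) := by
      intro K
      rw [hGK]
      simp [Matrix.smul_apply, Matrix.sum_apply]
    simp only [this, hG]
    exact hωG j l
  have hVt : Tendsto (fun K : ℕ => VK ω K) atTop (𝓝 V) := by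
    refine tendsto_pi_nhds.mpr ?_
    intro j
    rw [tendsto_pi_nhds]
    intro l
    have : ∀ K : ℕ, VK ω K j l
        = (K : ℝ)⁻¹ * ∑ i ∈ Finset.range K, φ j (F (χ i ω)) * φ l (χ i ω) := by
      intro K
      rw [hVK]
      simp [Matrix.smul_apply, Matrix.sum_apply]
    simp only [this, hV]
    exact hωV j l
  have hdett : Tendsto (fun K : ℕ => (GK ω K).det) atTop (𝓝 G.det) :=
    ((continuous_id.matrix_det (R := ℝ) (n := Fin N)).tendsto G).comp hGt
  have hev : ∀ᶠ K in atTop, IsUnit (GK ω K) := by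
    filter_upwards [hdett.eventually_ne hdetG] with K hK
    rw [Matrix.isUnit_iff_isUnit_det]
    exact isUnit_iff_ne_zero.mpr hK
  refine ⟨hev, ?_⟩
  have hinvcont : ContinuousAt Inv.inv G := by
    apply continuousAt_matrix_inv
    rw [show (Ring.inverse : ℝ → ℝ) = Inv.inv from funext fun x => Ring.inverse_eq_inv x]
    exact continuousAt_inv₀ hdetG
  have hinvt : Tendsto (fun K : ℕ => (GK ω K)⁻¹) atTop (𝓝 G⁻¹) :=
    hinvcont.tendsto.comp hGt
  exact hVt.mul hinvt
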